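/- Lifting lemma for ordinary graded narrowing: let R be a right-linear (Ω,Φ)-TRS over a Lawverean quantale, t a linear term, and τ a substitution. If tτ →*_{R,ε} s, then there exists a narrowing derivation t ⤳*_{R,σ,δ} s' with δ ≽ ε and s' an instance-generalization of s (i.e., s'χ = s for some substitution χ). -/

import Mathlib

/-! Graded terms over a `Φ`-graded signature: each function symbol carries a modal arity,
a list of quantale endomorphisms (one per argument). -/

/-- A graded signature: function symbols together with their modal arities,
lists of maps `Ω → Ω` (intended to be quantale endomorphisms, CBEs). -/
structure GradedSig (Ω : Type*) where
  Sym : Type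
  arity : Sym → List (Ω → Ω)

/-- First-order terms over a graded signature, with variables indexed by `ℕ`. -/
inductive GTerm {Ω : Type*} (F : GradedSig Ω) : Type
  | var : ℕ → GTerm F
  | app : (f : F.Sym) → (Fin (F.arity f).length → GTerm F) → GTerm F

namespace GTerm

variable {Ω : Type*} {F : GradedSig Ω}

/-- The subterm of `t` at position `p` (`none` if `p` is not a position of `t`). -/
def subtermAt : GTerm F → List ℕ → Option (GTerm F)
  | t, [] => some t
  | var _, _ :: _ => none
  | app f args, i :: p =>
      if h : i < (F.arity f).length then subtermAt (args ⟨i, h⟩) p else none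

/-- `replaceAt t p u` is `t[u]_p`, the replacement of the subterm of `t` at `p` by `u`
(returning `t` unchanged on the illegal cases). -/
def replaceAt : GTerm F → List ℕ → GTerm F → GTerm F
  | _, [], u => u
  | var v, _ :: _, _ => var v
  | app f args, i :: p, u =>
      app f (fun j => if (j : ℕ) = i then replaceAt (args j) p u else args j)

/-- The grade `∂_p(t)` of position `p` in term `t`: the composition of the modal grades
along `p`, with `∂_λ(t) = id` and `∂_{i.p}(f(t₁,…,tₙ)) = φᵢ ∘ ∂_p(tᵢ)`. -/
def gradeAt : GTerm F → List ℕ → (Ω → Ω)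
  | _, [] => id
  | var _, _ :: _ => id
  | app f args, i :: p =>
      if h : i < (F.arity f).length then
        ((F.arity f).get ⟨i, h⟩) ∘ gradeAt (args ⟨i, h⟩) p
      else id

/-- Application of a substitution `σ : ℕ → GTerm F` to a term. -/
def subst (σ : ℕ → GTerm F) : GTerm F → GTerm F
  | var v => σ v
  | app f args => app f (fun j => subst σ (args j))

/-- The set of variables of a term. -/
def vars : GTerm F → Set ℕ
  | var v => {v}
  | app _ args => ⋃ j, vars (args j)

/-- The set of positions of a term. -/
def Pos (t : GTerm F) : Set (List ℕ) := {p | (subtermAt t p).isSome}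

/-- The set of non-variable (function symbol) positions of a term. -/
def FunPos (t : GTerm F) : Set (List ℕ) :=
  {p | ∃ f args, subtermAt t p = some (app f args)}

/-- A term is linear if no variable occurs at two distinct positions. -/
def Linear (t : GTerm F) : Prop :=
  ∀ v p q, subtermAt t p = some (var v) → subtermAt t q = some (var v) → p = q

end GTerm

/-- A quantale endomorphism (change-of-base endofunctor, CBE): a monotone map preserving
the unit, the tensor, and arbitrary joins. -/
def IsCBE {Ω : Type*} [Monoid Ω] [CompleteLattice Ω] (φ : Ω → Ω) : Prop :=
  Monotone φ ∧ φ 1 = 1 ∧ (∀ a b : Ω, φ (a * b) = φ a * φ b) ∧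
    ∀ s : Set Ω, φ (sSup s) = sSup (φ '' s)

/-- A `Φ`-graded signature is one whose modal arities consist of CBEs. -/
def GradedSig.IsCBESig {Ω : Type*} [Monoid Ω] [CompleteLattice Ω] (F : GradedSig Ω) : Prop :=
  ∀ f : F.Sym, ∀ φ ∈ F.arity f, IsCBE φ

/-- A (commutative unital) quantale is Lawverean if it is integral (`κ = ⊤`),
cointegral (`ε ⊗ δ = ⊥` implies `ε = ⊥` or `δ = ⊥`), and nontrivial (`κ ≠ ⊥`). -/
def Lawverean (Ω : Type*) [CommMonoid Ω] [CompleteLattice Ω] : Prop :=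
  (1 : Ω) = ⊤ ∧ (∀ a b : Ω, a * b = ⊥ → a = ⊥ ∨ b = ⊥) ∧ (1 : Ω) ≠ ⊥
/-- An `(Ω,Φ)`-term rewriting system: every rule `ε ⊩ l ↦ r` has a non-variable
left-hand side and `Var(r) ⊆ Var(l)`. -/
def IsTRS {Ω : Type*} {F : GradedSig Ω} (R : Set (GTerm F × Ω × GTerm F)) : Prop :=
  ∀ l ε r, (l, ε, r) ∈ R → (∀ v, l ≠ GTerm.var v) ∧ GTerm.vars r ⊆ GTerm.vars l

/-- One-step graded rewriting: from a rule `δ ⊩ l ↦ r` infer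
`∂_p(t)(δ) ⊩ t = t[lσ]_p → t[rσ]_p`. -/
def Rew {Ω : Type*} {F : GradedSig Ω} (R : Set (GTerm F × Ω × GTerm F))
    (ε : Ω) (t s : GTerm F) : Prop :=
  ∃ (l : GTerm F) (δ : Ω) (r : GTerm F) (σ : ℕ → GTerm F) (p : List ℕ), (l, δ, r) ∈ R ∧
    GTerm.subtermAt t p = some (GTerm.subst σ l) ∧
    s = GTerm.replaceAt t p (GTerm.subst σ r) ∧
    ε = GTerm.gradeAt t p δ

/-- Graded reflexive-transitive closure of the symmetric rewrite relation
`↔_R = →_R ∪ ←_R`, combining degrees of consecutive steps by `⊗`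
(with the unit `κ` for zero steps): graded convertibility `t ↔*_{R,ε} s`. -/
inductive ConvStar {Ω : Type*} [Monoid Ω] {F : GradedSig Ω}
    (R : Set (GTerm F × Ω × GTerm F)) : Ω → GTerm F → GTerm F → Prop
  | refl (t) : ConvStar R 1 t t
  | step {ε δ t u s} : (Rew R ε t u ∨ Rew R ε u t) → ConvStar R δ u s →
      ConvStar R (ε * δ) t s

/-- Graded multi-step rewriting `t →*_{R,ε} s`, combining degrees by `⊗`. -/
inductive RewStar {Ω : Type*} [Monoid Ω] {F : GradedSig Ω}
    (R : Set (GTerm F × Ω × GTerm F)) : Ω → GTerm F → GTerm F → Prop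
  | refl (t) : RewStar R 1 t t
  | step {ε δ t u s} : Rew R ε t u → RewStar R δ u s → RewStar R (ε * δ) t s
/-- `σ` is a (syntactic) unifier of `u` and `v`. -/
def IsUnifier {Ω : Type*} {F : GradedSig Ω} (σ : ℕ → GTerm F) (u v : GTerm F) : Prop :=
  GTerm.subst σ u = GTerm.subst σ v

/-- `σ` is a most general (syntactic) unifier of `u` and `v`. -/
def IsMGU {Ω : Type*} {F : GradedSig Ω} (σ : ℕ → GTerm F) (u v : GTerm F) : Prop :=
  IsUnifier σ u v ∧
    ∀ τ : ℕ → GTerm F, IsUnifier τ u v →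
      ∃ ρ : ℕ → GTerm F, ∀ x, GTerm.subst ρ (σ x) = τ x

/-- The substitution renaming variables along `π`. -/
def renameBy {Ω : Type*} {F : GradedSig Ω} (π : ℕ → ℕ) : ℕ → GTerm F :=
  fun v => GTerm.var (π v)

/-- The data of a single narrowing step: the position used, the (renamed-apart) rule
`deg ⊩ lhs ↦ rhs`, and the most general unifier applied. -/
structure NStep (Ω : Type*) (F : GradedSig Ω) where
  pos : List ℕ
  lhs : GTerm F
  rhs : GTerm F
  deg : Ω
  mgu : ℕ → GTerm F

/-- Validity of a narrowing step `st` from term `t` with respect to `R`: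
`st.pos` is a non-variable position of `t`; the rule `st.deg ⊩ st.lhs ↦ st.rhs` is a
renamed-apart variant of a rule of `R` sharing no variables with `t`; and `st.mgu` is a
most general syntactic unifier of `t|_{st.pos}` and `st.lhs`. -/
def StepOK {Ω : Type*} {F : GradedSig Ω} (R : Set (GTerm F × Ω × GTerm F))
    (t : GTerm F) (st : NStep Ω F) : Prop :=
  st.pos ∈ GTerm.FunPos t ∧
  (∃ (l₀ r₀ : GTerm F) (π : ℕ → ℕ), Function.Injective π ∧ (l₀, st.deg, r₀) ∈ R ∧
    st.lhs = GTerm.subst (renameBy π) l₀ ∧ st.rhs = GTerm.subst (renameBy π) r₀ ∧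
    (GTerm.vars st.lhs ∪ GTerm.vars st.rhs) ∩ GTerm.vars t = ∅) ∧
  (∃ u, GTerm.subtermAt t st.pos = some u ∧ IsMGU st.mgu u st.lhs)

/-- The result `(t[rhs]_p)σ` of a narrowing step. -/
def nnext {Ω : Type*} {F : GradedSig Ω} (t : GTerm F) (st : NStep Ω F) : GTerm F :=
  GTerm.subst st.mgu (GTerm.replaceAt t st.pos st.rhs)

/-- Validity of a narrowing derivation from `t` given by a list of steps. -/
def ValidDeriv {Ω : Type*} {F : GradedSig Ω} (R : Set (GTerm F × Ω × GTerm F)) :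
    GTerm F → List (NStep Ω F) → Prop
  | _, [] => True
  | t, st :: l => StepOK R t st ∧ ValidDeriv R (nnext t st) l

/-- One step of the evolution of the set of basic positions:
`B_{i+1} = {q ∈ B_i | p_i ⋢ q} ∪ {p_i.q | q a non-variable position of r_i}`. -/
def basicNext {Ω : Type*} {F : GradedSig Ω} (B : Set (List ℕ)) (st : NStep Ω F) :
    Set (List ℕ) :=
  {q ∈ B | ¬ st.pos <+: q} ∪ {p | ∃ q ∈ GTerm.FunPos st.rhs, p = st.pos ++ q}

/-- The derivation given by `steps` is basic with respect to the initial set `B` of basic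
positions: each narrowing position belongs to the current set of basic positions. -/
def BasicFrom {Ω : Type*} {F : GradedSig Ω} : Set (List ℕ) → List (NStep Ω F) → Prop
  | _, [] => True
  | B, st :: l => st.pos ∈ B ∧ BasicFrom (basicNext B st) l

/-- Along the derivation, the set of basic positions of each intermediate term equals its
set of non-variable positions. -/
def BasicEqFunPos {Ω : Type*} {F : GradedSig Ω} :
    Set (List ℕ) → GTerm F → List (NStep Ω F) → Prop
  | B, t, [] => B = GTerm.FunPos t
  | B, t, st :: l => B = GTerm.FunPos t ∧ BasicEqFunPos (basicNext B st) (nnext t st) l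

/-- One graded narrowing step `t ⤳_{R,σ,∂_p(t)(ε)} (t[rρ]_p)σ`. -/
def Narrow {Ω : Type*} {F : GradedSig Ω} (R : Set (GTerm F × Ω × GTerm F))
    (σ : ℕ → GTerm F) (δ : Ω) (t s : GTerm F) : Prop :=
  ∃ st : NStep Ω F, StepOK R t st ∧ σ = st.mgu ∧
    δ = GTerm.gradeAt t st.pos st.deg ∧ s = nnext t st

/-- Multi-step graded narrowing `t ⤳*_{R,σ,δ} s`: degrees compose by `⊗` and
substitutions by composition (with the identity substitution and `κ` for zero steps). -/
inductive NarrowStar {Ω : Type*} [Monoid Ω] {F : GradedSig Ω}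
    (R : Set (GTerm F × Ω × GTerm F)) :
    (ℕ → GTerm F) → Ω → GTerm F → GTerm F → Prop
  | refl (t) : NarrowStar R GTerm.var 1 t t
  | step {σ₁ σ₂ : ℕ → GTerm F} {ε₁ ε₂ t u s} :
      Narrow R σ₁ ε₁ t u → NarrowStar R σ₂ ε₂ u s →
      NarrowStar R (fun v => GTerm.subst σ₂ (σ₁ v)) (ε₁ * ε₂) t s

namespace GTerm

variable {Ω : Type*} {F : GradedSig Ω}

@[simp] lemma subtermAt_nil (t : GTerm F) : subtermAt t [] = some t := by cases t <;> rfl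

@[simp] lemma replaceAt_nil (t w : GTerm F) : replaceAt t [] w = w := by cases t <;> rfl

@[simp] lemma gradeAt_nil (t : GTerm F) : gradeAt t [] = id := by cases t <;> rfl

lemma subtermAt_app_cons (f : F.Sym) (args : Fin (F.arity f).length → GTerm F) (i : ℕ)
    (p : List ℕ) :
    subtermAt (app f args) (i :: p) =
      if h : i < (F.arity f).length then subtermAt (args ⟨i, h⟩) p else none := rfl

lemma subtermAt_app_fin (f : F.Sym) (args : Fin (F.arity f).length → GTerm F)
    (j : Fin (F.arity f).length) (p : List ℕ) :
    subtermAt (app f args) ((j : ℕ) :: p) = subtermAt (args j) p := by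
  rw [subtermAt_app_cons, dif_pos j.isLt]

@[simp] lemma vars_var (v : ℕ) : vars (var v : GTerm F) = {v} := rfl

lemma vars_app (f : F.Sym) (args) : vars (app f args : GTerm F) = ⋃ j, vars (args j) := rfl

@[simp] lemma subst_var' (σ : ℕ → GTerm F) (v : ℕ) : subst σ (var v) = σ v := rfl

lemma subst_app (σ : ℕ → GTerm F) (f : F.Sym) (args) :
    subst σ (app f args) = app f (fun j => subst σ (args j)) := rfl

lemma subst_subst (σ θ : ℕ → GTerm F) (t : GTerm F) :
    subst σ (subst θ t) = subst (fun x => subst σ (θ x)) t := by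
  induction t with
  | var v => rfl
  | app f args ih => simp only [subst_app]; congr 1; funext j; exact ih j

lemma subst_eqOn {σ σ' : ℕ → GTerm F} {t : GTerm F} (h : ∀ x ∈ vars t, σ x = σ' x) :
    subst σ t = subst σ' t := by
  induction t with
  | var v => exact h v rfl
  | app f args ih =>
      simp only [subst_app]; congr 1; funext j
      exact ih j (fun x hx => h x (by rw [vars_app]; exact Set.mem_iUnion.2 ⟨j, hx⟩))

@[simp] lemma subst_id (t : GTerm F) : subst var t = t := by
  induction t with
  | var v => rfl
  | app f args ih => simp only [subst_app]; congr 1; funext j; exact ih j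

lemma mem_vars_iff {x : ℕ} {t : GTerm F} :
    x ∈ vars t ↔ ∃ p, subtermAt t p = some (var x) := by
  induction t with
  | var v =>
      simp only [vars_var, Set.mem_singleton_iff]
      constructor
      · rintro rfl; exact ⟨[], rfl⟩
      · rintro ⟨p, hp⟩
        cases p with
        | nil =>
            rw [subtermAt_nil] at hp
            injection hp with h; injection h with h; exact h.symm
        | cons i q => simp [subtermAt] at hp
  | app f args ih =>
      rw [vars_app]
      constructor
      · intro hx
        obtain ⟨j, hj⟩ := Set.mem_iUnion.1 hx
        obtain ⟨p, hp⟩ := (ih j).1 hj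
        exact ⟨(j : ℕ) :: p, by rw [subtermAt_app_fin]; exact hp⟩
      · rintro ⟨p, hp⟩
        cases p with
        | nil => simp at hp
        | cons i q =>
            rw [subtermAt_app_cons] at hp
            by_cases hi : i < (F.arity f).length
            · rw [dif_pos hi] at hp
              exact Set.mem_iUnion.2 ⟨⟨i, hi⟩, (ih _).2 ⟨q, hp⟩⟩
            · rw [dif_neg hi] at hp; cases hp

lemma mem_vars_of_subtermAt {x : ℕ} {t : GTerm F} {p : List ℕ}
    (h : subtermAt t p = some (var x)) : x ∈ vars t := mem_vars_iff.2 ⟨p, h⟩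

lemma vars_subst_mem {σ : ℕ → GTerm F} {t : GTerm F} {y : ℕ} :
    y ∈ vars (subst σ t) ↔ ∃ x ∈ vars t, y ∈ vars (σ x) := by
  induction t with
  | var v => simp
  | app f args ih =>
      simp only [subst_app, vars_app, Set.mem_iUnion]
      constructor
      · rintro ⟨j, hj⟩
        obtain ⟨x, hx, hy⟩ := (ih j).1 hj
        exact ⟨x, ⟨j, hx⟩, hy⟩
      · rintro ⟨x, ⟨j, hj⟩, hy⟩
        exact ⟨j, (ih j).2 ⟨x, hj, hy⟩⟩

lemma subtermAt_append (t : GTerm F) (p q : List ℕ) :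
    subtermAt t (p ++ q) = (subtermAt t p).bind (fun u => subtermAt u q) := by
  induction p generalizing t with
  | nil => simp
  | cons i p' ih =>
      cases t with
      | var v => rfl
      | app f args =>
          simp only [List.cons_append, subtermAt_app_cons]
          by_cases hi : i < (F.arity f).length
          · rw [dif_pos hi, dif_pos hi, ih]
          · rw [dif_neg hi, dif_neg hi]; rfl

lemma subtermAt_subst {t u : GTerm F} {p : List ℕ} (σ : ℕ → GTerm F)
    (h : subtermAt t p = some u) : subtermAt (subst σ t) p = some (subst σ u) := by
  induction p generalizing t with
  | nil => simp at h ⊢; rw [h]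
  | cons i q ih =>
      cases t with
      | var v => simp [subtermAt] at h
      | app f args =>
          rw [subtermAt_app_cons] at h
          by_cases hi : i < (F.arity f).length
          · rw [dif_pos hi] at h
            rw [subst_app, subtermAt_app_cons, dif_pos hi]
            exact ih h
          · rw [dif_neg hi] at h; cases h

end GTerm
namespace GTerm

variable {Ω : Type*} {F : GradedSig Ω}

lemma varpos_subst {σ : ℕ → GTerm F} {t : GTerm F} {p : List ℕ} {v : ℕ}
    (h : subtermAt (subst σ t) p = some (var v)) :
    ∃ p₁ p₂ x, p = p₁ ++ p₂ ∧ subtermAt t p₁ = some (var x) ∧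
      subtermAt (σ x) p₂ = some (var v) := by
  induction t generalizing p with
  | var x => exact ⟨[], p, x, rfl, rfl, h⟩
  | app f args ih =>
      cases p with
      | nil => rw [subst_app, subtermAt_nil] at h; cases h
      | cons i q =>
          rw [subst_app, subtermAt_app_cons] at h
          by_cases hi : i < (F.arity f).length
          · rw [dif_pos hi] at h
            obtain ⟨p₁, p₂, x, rfl, h1, h2⟩ := ih _ h
            refine ⟨i :: p₁, p₂, x, rfl, ?_, h2⟩
            rw [subtermAt_app_cons, dif_pos hi]; exact h1
          · rw [dif_neg hi] at h; cases h

lemma Linear.subst_lin {t : GTerm F} (ht : Linear t) {σ : ℕ → GTerm F}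
    (h1 : ∀ x ∈ vars t, Linear (σ x))
    (h2 : ∀ x y, x ∈ vars t → y ∈ vars t → x ≠ y → vars (σ x) ∩ vars (σ y) = ∅) :
    Linear (subst σ t) := by
  intro v p q hp hq
  obtain ⟨p₁, p₂, x, rfl, hp1, hp2⟩ := varpos_subst hp
  obtain ⟨q₁, q₂, y, rfl, hq1, hq2⟩ := varpos_subst hq
  by_cases hxy : x = y
  · subst hxy
    have e1 : p₁ = q₁ := ht x p₁ q₁ hp1 hq1
    have e2 : p₂ = q₂ := h1 x (mem_vars_of_subtermAt hp1) v p₂ q₂ hp2 hq2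
    rw [e1, e2]
  · exfalso
    have : v ∈ vars (σ x) ∩ vars (σ y) :=
      ⟨mem_vars_of_subtermAt hp2, mem_vars_of_subtermAt hq2⟩
    rw [h2 x y (mem_vars_of_subtermAt hp1) (mem_vars_of_subtermAt hq1) hxy] at this
    exact this

lemma Linear.child {f : F.Sym} {args : Fin (F.arity f).length → GTerm F}
    (h : Linear (app f args)) (j : Fin (F.arity f).length) : Linear (args j) := by
  intro v p q hp hq
  have := h v ((j : ℕ) :: p) ((j : ℕ) :: q)
    (by rw [subtermAt_app_fin]; exact hp) (by rw [subtermAt_app_fin]; exact hq)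
  injection this

lemma Linear.child_disjoint {f : F.Sym} {args : Fin (F.arity f).length → GTerm F}
    (h : Linear (app f args)) {i j : Fin (F.arity f).length} (hij : i ≠ j) :
    vars (args i) ∩ vars (args j) = ∅ := by
  ext v
  simp only [Set.mem_inter_iff, Set.mem_empty_iff_false, iff_false, not_and]
  intro hvi hvj
  obtain ⟨p, hp⟩ := mem_vars_iff.1 hvi
  obtain ⟨q, hq⟩ := mem_vars_iff.1 hvj
  have := h v ((i : ℕ) :: p) ((j : ℕ) :: q)
    (by rw [subtermAt_app_fin]; exact hp) (by rw [subtermAt_app_fin]; exact hq)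
  injection this with h1 _
  exact hij (Fin.ext h1)

lemma replaceAt_app_cons (f : F.Sym) (args : Fin (F.arity f).length → GTerm F)
    (i : ℕ) (p : List ℕ) (w : GTerm F) :
    replaceAt (app f args) (i :: p) w =
      app f (fun j => if (j : ℕ) = i then replaceAt (args j) p w else args j) := rfl

lemma subst_replaceAt {t : GTerm F} {p : List ℕ} (h : (subtermAt t p).isSome)
    (σ : ℕ → GTerm F) (w : GTerm F) :
    subst σ (replaceAt t p w) = replaceAt (subst σ t) p (subst σ w) := by
  induction p generalizing t with
  | nil => simp
  | cons i q ih =>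
      cases t with
      | var v => simp [subtermAt] at h
      | app f args =>
          rw [subtermAt_app_cons] at h
          by_cases hi : i < (F.arity f).length
          · rw [dif_pos hi] at h
            rw [replaceAt_app_cons, subst_app, subst_app, replaceAt_app_cons]
            congr 1
            funext j
            by_cases hj : (j : ℕ) = i
            · rw [if_pos hj, if_pos hj]
              have hji : j = ⟨i, hi⟩ := Fin.ext hj
              subst hji
              exact ih h
            · rw [if_neg hj, if_neg hj]
          · rw [dif_neg hi] at h; simp at h

lemma gradeAt_subst {t : GTerm F} {p : List ℕ} (h : (subtermAt t p).isSome)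
    (σ : ℕ → GTerm F) : gradeAt (subst σ t) p = gradeAt t p := by
  induction p generalizing t with
  | nil => simp
  | cons i q ih =>
      cases t with
      | var v => simp [subtermAt] at h
      | app f args =>
          rw [subtermAt_app_cons] at h
          by_cases hi : i < (F.arity f).length
          · rw [dif_pos hi] at h
            show gradeAt (app f _) (i :: q) = _
            show (if h' : i < (F.arity f).length then
              ((F.arity f).get ⟨i, h'⟩) ∘ gradeAt (subst σ (args ⟨i, h'⟩)) q else id) = _
            rw [dif_pos hi]
            show _ = (if h' : i < (F.arity f).length then
              ((F.arity f).get ⟨i, h'⟩) ∘ gradeAt (args ⟨i, h'⟩) q else id)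
            rw [dif_pos hi, ih h]
          · rw [dif_neg hi] at h; simp at h

lemma subtermAt_replaceAt_var {t w : GTerm F} {p q : List ℕ} {v : ℕ}
    (h : subtermAt (replaceAt t p w) q = some (var v)) :
    (∃ r, q = p ++ r ∧ subtermAt w r = some (var v)) ∨
      (¬ p <+: q ∧ subtermAt t q = some (var v)) := by
  induction t generalizing p q with
  | var y =>
      cases p with
      | nil => exact Or.inl ⟨q, rfl, by rwa [replaceAt_nil] at h⟩
      | cons i p' =>
          cases q with
          | nil => exact Or.inr ⟨by simp, h⟩
          | cons j q' => simp [replaceAt, subtermAt] at h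
  | app f args ih =>
      cases p with
      | nil => exact Or.inl ⟨q, rfl, by rwa [replaceAt_nil] at h⟩
      | cons i p' =>
          cases q with
          | nil =>
              rw [subtermAt_nil] at h
              cases h
          | cons j q' =>
              rw [replaceAt_app_cons, subtermAt_app_cons] at h
              by_cases hj : j < (F.arity f).length
              · rw [dif_pos hj] at h
                by_cases hji : j = i
                · subst hji
                  rw [if_pos (rfl :
                    ((⟨j, hj⟩ : Fin (F.arity f).length) : ℕ) = j)] at h
                  obtain hL | ⟨hnp, hs⟩ := ih _ h
                  · obtain ⟨r, rfl, hw⟩ := hL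
                    exact Or.inl ⟨r, rfl, hw⟩
                  · right
                    refine ⟨?_, ?_⟩
                    · intro hpre
                      exact hnp (by
                        obtain ⟨l, hl⟩ := hpre
                        injection hl with _ hl'
                        exact ⟨l, hl'⟩)
                    · rw [subtermAt_app_cons, dif_pos hj]; exact hs
                · rw [if_neg (by exact hji :
                    ¬ ((⟨j, hj⟩ : Fin (F.arity f).length) : ℕ) = i)] at h
                  right
                  refine ⟨?_, by rw [subtermAt_app_cons, dif_pos hj]; exact h⟩
                  intro hpre
                  obtain ⟨l, hl⟩ := hpre
                  injection hl with h1 _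
                  exact hji h1.symm
              · rw [dif_neg hj] at h; cases h

end GTerm
namespace GTerm

variable {Ω : Type*} {F : GradedSig Ω}

lemma mem_vars_of_replaceAt {t w : GTerm F} {p q : List ℕ} {v : ℕ}
    (h : subtermAt (replaceAt t p w) q = some (var v)) : v ∈ vars w ∨ v ∈ vars t := by
  obtain ⟨r, _, hw⟩ | ⟨_, ht⟩ := subtermAt_replaceAt_var h
  · exact Or.inl (mem_vars_of_subtermAt hw)
  · exact Or.inr (mem_vars_of_subtermAt ht)

lemma Linear.replaceAt_lin {t w : GTerm F} (ht : Linear t) (hw : Linear w)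
    (hd : vars t ∩ vars w = ∅) (p : List ℕ) : Linear (replaceAt t p w) := by
  intro v q₁ q₂ h1 h2
  obtain ⟨r₁, rfl, hw1⟩ | ⟨hn1, ht1⟩ := subtermAt_replaceAt_var h1 <;>
    obtain ⟨r₂, hq2, hw2⟩ | ⟨hn2, ht2⟩ := subtermAt_replaceAt_var h2
  · rw [hq2, hw v r₁ r₂ hw1 hw2]
  · exfalso
    have : v ∈ vars t ∩ vars w := ⟨mem_vars_of_subtermAt ht2, mem_vars_of_subtermAt hw1⟩
    rw [hd] at this; exact this
  · exfalso
    have : v ∈ vars t ∩ vars w := ⟨mem_vars_of_subtermAt ht1, mem_vars_of_subtermAt hw2⟩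
    rw [hd] at this; exact this
  · exact ht v q₁ q₂ ht1 ht2

lemma Linear.subterm {t u : GTerm F} (ht : Linear t) {p : List ℕ}
    (h : subtermAt t p = some u) : Linear u := by
  intro v r₁ r₂ h1 h2
  have e1 : subtermAt t (p ++ r₁) = some (var v) := by
    rw [subtermAt_append, h]; exact h1
  have e2 : subtermAt t (p ++ r₂) = some (var v) := by
    rw [subtermAt_append, h]; exact h2
  exact List.append_cancel_left (ht v (p ++ r₁) (p ++ r₂) e1 e2)

lemma vars_subterm_subset {t u : GTerm F} {p : List ℕ} (h : subtermAt t p = some u) :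
    vars u ⊆ vars t := by
  intro x hx
  obtain ⟨r, hr⟩ := mem_vars_iff.1 hx
  exact mem_vars_of_subtermAt (by rw [subtermAt_append, h]; exact hr)

lemma mem_vars_replaceAt_cases {t u w : GTerm F} {p : List ℕ} (ht : Linear t)
    (hu : subtermAt t p = some u) {x : ℕ} (hx : x ∈ vars (replaceAt t p w)) :
    x ∈ vars w ∨ (x ∈ vars t ∧ x ∉ vars u) := by
  obtain ⟨q, hq⟩ := mem_vars_iff.1 hx
  obtain ⟨r, rfl, hw⟩ | ⟨hn, hts⟩ := subtermAt_replaceAt_var hq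
  · exact Or.inl (mem_vars_of_subtermAt hw)
  · refine Or.inr ⟨mem_vars_of_subtermAt hts, fun hxu => ?_⟩
    obtain ⟨r, hr⟩ := mem_vars_iff.1 hxu
    have : subtermAt t (p ++ r) = some (var x) := by
      rw [subtermAt_append, hu]; exact hr
    exact hn (ht x q (p ++ r) hts this ▸ ⟨r, rfl⟩)

lemma exists_bound (t : GTerm F) : ∃ N, ∀ v ∈ vars t, v < N := by
  induction t with
  | var v => exact ⟨v + 1, by simp⟩
  | app f args ih =>
      choose B hB using ih
      refine ⟨Finset.univ.sup B, fun v hv => ?_⟩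
      rw [vars_app] at hv
      obtain ⟨j, hj⟩ := Set.mem_iUnion.1 hv
      exact lt_of_lt_of_le (hB j v hj) (Finset.le_sup (Finset.mem_univ j))

lemma subtermAt_subst_cases {t : GTerm F} {τ : ℕ → GTerm F} {p : List ℕ} {w : GTerm F}
    (h : subtermAt (subst τ t) p = some w) :
    (∃ f args', subtermAt t p = some (app f args')) ∨
      (∃ p₁ p₂ x, p = p₁ ++ p₂ ∧ subtermAt t p₁ = some (var x) ∧
        subtermAt (τ x) p₂ = some w) := by
  induction t generalizing p with
  | var x => exact Or.inr ⟨[], p, x, rfl, rfl, h⟩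
  | app f args ih =>
      cases p with
      | nil => exact Or.inl ⟨f, args, rfl⟩
      | cons i q =>
          rw [subst_app, subtermAt_app_cons] at h
          by_cases hi : i < (F.arity f).length
          · rw [dif_pos hi] at h
            obtain ⟨f', args', hs⟩ | ⟨p₁, p₂, x, rfl, h1, h2⟩ := ih _ h
            · exact Or.inl ⟨f', args', by rw [subtermAt_app_cons, dif_pos hi]; exact hs⟩
            · exact Or.inr ⟨i :: p₁, p₂, x, rfl,
                by rw [subtermAt_app_cons, dif_pos hi]; exact h1, h2⟩
          · rw [dif_neg hi] at h; cases h

lemma replaceAt_under_var {t : GTerm F} (ht : Linear t) {p₁ : List ℕ} {x : ℕ}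
    (hv : subtermAt t p₁ = some (var x)) (τ : ℕ → GTerm F) (p₂ : List ℕ) (w : GTerm F) :
    replaceAt (subst τ t) (p₁ ++ p₂) w =
      subst (Function.update τ x (replaceAt (τ x) p₂ w)) t := by
  induction t generalizing p₁ with
  | var y =>
      cases p₁ with
      | nil =>
          rw [subtermAt_nil] at hv
          injection hv with hv; injection hv with hv
          subst hv
          simp
      | cons i q => simp [subtermAt] at hv
  | app f args ih =>
      cases p₁ with
      | nil =>
          rw [subtermAt_nil] at hv; cases hv
      | cons i q =>
          rw [subtermAt_app_cons] at hv
          by_cases hi : i < (F.arity f).length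
          · rw [dif_pos hi] at hv
            rw [subst_app, List.cons_append, replaceAt_app_cons, subst_app]
            congr 1
            funext j
            by_cases hj : (j : ℕ) = i
            · rw [if_pos hj]
              have hji : j = ⟨i, hi⟩ := Fin.ext hj
              subst hji
              exact ih _ (ht.child _) hv
            · rw [if_neg hj]
              refine (subst_eqOn fun z hz => ?_).symm
              have hzx : z ≠ x := by
                rintro rfl
                obtain ⟨r, hr⟩ := mem_vars_iff.1 hz
                have e1 : subtermAt (app f args) ((j : ℕ) :: r) = some (var z) := by
                  rw [subtermAt_app_fin]; exact hr
                have e2 : subtermAt (app f args) (i :: q) = some (var z) := by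
                  rw [subtermAt_app_cons, dif_pos hi]; exact hv
                have := ht z _ _ e1 e2
                injection this with h1 _
                exact hj h1
              rw [Function.update_of_ne hzx]
          · rw [dif_neg hi] at hv; cases hv

end GTerm
namespace GTerm

variable {Ω : Type*} {F : GradedSig Ω}

/-- Single-variable binding substitution. -/
def bind1 (x : ℕ) (w : GTerm F) : ℕ → GTerm F := fun z => if z = x then w else var z

@[simp] lemma bind1_same (x : ℕ) (w : GTerm F) : bind1 x w x = w := by simp [bind1]

lemma bind1_other {x z : ℕ} (h : z ≠ x) (w : GTerm F) : bind1 x w z = var z := by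
  simp [bind1, h]

lemma subst_bind1_of_not_mem {x : ℕ} {t : GTerm F} (h : x ∉ vars t) (w : GTerm F) :
    subst (bind1 x w) t = t := by
  rw [subst_eqOn (σ' := var) (fun z hz => bind1_other (fun e => h (by rwa [e] at hz)) w),
    subst_id]

/-- Variables of left components of a unification problem. -/
def UV (ps : List (GTerm F × GTerm F)) : Set ℕ := {x | ∃ q ∈ ps, x ∈ vars q.1}

/-- Variables of right components of a unification problem. -/
def VV (ps : List (GTerm F × GTerm F)) : Set ℕ := {x | ∃ q ∈ ps, x ∈ vars q.2}

/-- `μ` unifies all pairs of a unification problem. -/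
def Unifies (μ : ℕ → GTerm F) (ps : List (GTerm F × GTerm F)) : Prop :=
  ∀ q ∈ ps, subst μ q.1 = subst μ q.2

/-- The package of properties of the most general unifier produced for a problem. -/
def UOK (ps : List (GTerm F × GTerm F)) (θ : ℕ → GTerm F) : Prop :=
  Unifies θ ps ∧
  (∀ μ, Unifies μ ps → ∀ x, subst μ (θ x) = μ x) ∧
  (∀ x, x ∉ UV ps → x ∉ VV ps → θ x = var x) ∧
  (∀ x y, y ∈ vars (θ x) → y = x ∨ y ∈ UV ps ∨ y ∈ VV ps) ∧
  (∀ x, x ∉ UV ps → Linear (θ x)) ∧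
  (∀ x y, x ∉ UV ps → y ∉ UV ps → x ≠ y → vars (θ x) ∩ vars (θ y) = ∅)

@[simp] lemma mem_UV_nil (x : ℕ) : x ∈ UV ([] : List (GTerm F × GTerm F)) ↔ False := by
  simp [UV]

@[simp] lemma mem_VV_nil (x : ℕ) : x ∈ VV ([] : List (GTerm F × GTerm F)) ↔ False := by
  simp [VV]

lemma mem_UV_cons {x : ℕ} {q : GTerm F × GTerm F} {ps : List (GTerm F × GTerm F)} :
    x ∈ UV (q :: ps) ↔ x ∈ vars q.1 ∨ x ∈ UV ps := by
  constructor
  · rintro ⟨q', hq', hx⟩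
    rcases List.mem_cons.1 hq' with rfl | h
    · exact Or.inl hx
    · exact Or.inr ⟨q', h, hx⟩
  · rintro (h | ⟨q', hq', hx⟩)
    · exact ⟨q, List.mem_cons_self, h⟩
    · exact ⟨q', List.mem_cons_of_mem _ hq', hx⟩

lemma mem_VV_cons {x : ℕ} {q : GTerm F × GTerm F} {ps : List (GTerm F × GTerm F)} :
    x ∈ VV (q :: ps) ↔ x ∈ vars q.2 ∨ x ∈ VV ps := by
  constructor
  · rintro ⟨q', hq', hx⟩
    rcases List.mem_cons.1 hq' with rfl | h
    · exact Or.inl hx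
    · exact Or.inr ⟨q', h, hx⟩
  · rintro (h | ⟨q', hq', hx⟩)
    · exact ⟨q, List.mem_cons_self, h⟩
    · exact ⟨q', List.mem_cons_of_mem _ hq', hx⟩

lemma linear_var (v : ℕ) : Linear (var v : GTerm F) := by
  intro x p q hp hq
  cases p with
  | nil =>
      cases q with
      | nil => rfl
      | cons j q' => simp [subtermAt] at hq
  | cons i p' => simp [subtermAt] at hp

lemma subst_absorb {μ θ : ℕ → GTerm F} (h : ∀ x, subst μ (θ x) = μ x) (w : GTerm F) :
    subst μ (subst θ w) = subst μ w := by
  rw [subst_subst]; exact subst_eqOn fun x _ => h x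

lemma UOK_nil : UOK ([] : List (GTerm F × GTerm F)) var := by
  refine ⟨fun q hq => by simp at hq, fun μ _ x => rfl, fun x _ _ => rfl,
    fun x y hy => ?_, fun x _ => linear_var x, fun x y _ _ hxy => ?_⟩
  · left; simpa using hy
  · ext z
    simp only [vars_var, Set.mem_inter_iff, Set.mem_singleton_iff, Set.mem_empty_iff_false,
      iff_false, not_and]
    rintro rfl rfl; exact hxy rfl

/-- The size of a term (for the unification termination measure). -/
def gsize : GTerm F → ℕ
  | var _ => 1
  | app _ args => 1 + ∑ j, gsize (args j)

lemma gsize_pos (t : GTerm F) : 1 ≤ gsize t := by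
  cases t with
  | var v => exact le_refl 1
  | app f args => exact Nat.le_add_right 1 _

end GTerm
namespace GTerm

variable {Ω : Type*} {F : GradedSig Ω}

lemma UOK_step {u₀ v₀ : GTerm F} {tail : List (GTerm F × GTerm F)} {θ₁ θ₂ : ℕ → GTerm F}
    (hlin : List.Pairwise (fun a b => vars a.1 ∩ vars b.1 = ∅)
      (((u₀, v₀) : GTerm F × GTerm F) :: tail))
    (hdisj : ∀ x, x ∈ UV (((u₀, v₀) : GTerm F × GTerm F) :: tail) →
      x ∈ VV (((u₀, v₀) : GTerm F × GTerm F) :: tail) → False)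
    (h1 : subst θ₁ u₀ = subst θ₁ v₀)
    (h2 : ∀ μ : ℕ → GTerm F, subst μ u₀ = subst μ v₀ → ∀ x, subst μ (θ₁ x) = μ x)
    (h3 : ∀ x, x ∉ vars u₀ → x ∉ vars v₀ → θ₁ x = var x)
    (h4 : ∀ x y, y ∈ vars (θ₁ x) → y = x ∨ y ∈ vars u₀ ∨ y ∈ vars v₀)
    (h5 : ∀ x, x ∉ vars u₀ → Linear (θ₁ x))
    (h6 : ∀ x y, x ∉ vars u₀ → y ∉ vars u₀ → x ≠ y → vars (θ₁ x) ∩ vars (θ₁ y) = ∅)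
    (hok2 : UOK (tail.map fun q => (q.1, subst θ₁ q.2)) θ₂) :
    UOK (((u₀, v₀) : GTerm F × GTerm F) :: tail) (fun x => subst θ₂ (θ₁ x)) := by
  obtain ⟨k1, k2, k3, k4, k5, k6⟩ := hok2
  set ps' := tail.map fun q => (q.1, subst θ₁ q.2) with hps'
  have hpair : ∀ q ∈ tail, vars u₀ ∩ vars q.1 = ∅ := by
    intro q hq
    exact (List.pairwise_cons.1 hlin).1 q hq
  have hUV' : ∀ x, x ∈ UV ps' ↔ x ∈ UV tail := by
    intro x
    constructor
    · rintro ⟨q, hq, hx⟩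
      obtain ⟨q', hq', rfl⟩ := List.mem_map.1 hq
      exact ⟨q', hq', hx⟩
    · rintro ⟨q', hq', hx⟩
      exact ⟨(q'.1, subst θ₁ q'.2), List.mem_map.2 ⟨q', hq', rfl⟩, hx⟩
  have hVV' : ∀ x, x ∈ VV ps' → x ∈ VV tail ∨ x ∈ vars u₀ ∨ x ∈ vars v₀ := by
    rintro x ⟨q, hq, hx⟩
    obtain ⟨q', hq', rfl⟩ := List.mem_map.1 hq
    obtain ⟨z, hz, hxz⟩ := vars_subst_mem.1 hx
    rcases h4 z x hxz with rfl | h | h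
    · exact Or.inl ⟨q', hq', hz⟩
    · exact Or.inr (Or.inl h)
    · exact Or.inr (Or.inr h)
  have hid_tail : ∀ q' ∈ tail, ∀ z ∈ vars q'.1, θ₁ z = var z := by
    intro q' hq' z hz
    refine h3 z (fun hzu => ?_) (fun hzv => ?_)
    · have := hpair q' hq'
      have : z ∈ vars u₀ ∩ vars q'.1 := ⟨hzu, hz⟩
      rw [hpair q' hq'] at this; exact this
    · exact hdisj z (mem_UV_cons.2 (Or.inr ⟨q', hq', hz⟩)) (mem_VV_cons.2 (Or.inl hzv))
  have hsubst_tail : ∀ q' ∈ tail, subst θ₁ q'.1 = q'.1 := by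
    intro q' hq'
    rw [subst_eqOn (σ' := var) (hid_tail q' hq'), subst_id]
  have haux : ∀ x, x ∉ UV (((u₀, v₀) : GTerm F × GTerm F) :: tail) →
      ∀ z ∈ vars (θ₁ x), z ∉ UV ps' := by
    intro x hxU z hz hzU
    have hzT : z ∈ UV tail := (hUV' z).1 hzU
    obtain ⟨q', hq', hzq⟩ := hzT
    rcases h4 x z hz with rfl | h | h
    · exact hxU (mem_UV_cons.2 (Or.inr ⟨q', hq', hzq⟩))
    · have : z ∈ vars u₀ ∩ vars q'.1 := ⟨h, hzq⟩
      rw [hpair q' hq'] at this; exact this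
    · exact hdisj z (mem_UV_cons.2 (Or.inr ⟨q', hq', hzq⟩)) (mem_VV_cons.2 (Or.inl h))
  refine ⟨?_, ?_, ?_, ?_, ?_, ?_⟩
  · -- Unifies
    intro q hq
    rcases List.mem_cons.1 hq with rfl | hq'
    · show subst _ u₀ = subst _ v₀
      rw [← subst_subst, ← subst_subst, h1]
    · show subst _ q.1 = subst _ q.2
      rw [← subst_subst, ← subst_subst, hsubst_tail q hq']
      exact k1 (q.1, subst θ₁ q.2) (List.mem_map.2 ⟨q, hq', rfl⟩)
  · -- factoring
    intro μ hμ x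
    have hμ₁ : ∀ z, subst μ (θ₁ z) = μ z := h2 μ (hμ _ (List.mem_cons_self))
    have hμ' : Unifies μ ps' := by
      intro q hq
      obtain ⟨q', hq', rfl⟩ := List.mem_map.1 hq
      show subst μ q'.1 = subst μ (subst θ₁ q'.2)
      rw [subst_absorb hμ₁]
      exact hμ q' (List.mem_cons_of_mem _ hq')
    show subst μ (subst θ₂ (θ₁ x)) = μ x
    rw [subst_absorb (k2 μ hμ'), hμ₁ x]
  · -- identity outside
    intro x hxU hxV
    have hxu : x ∉ vars u₀ := fun h => hxU (mem_UV_cons.2 (Or.inl h))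
    have hxv : x ∉ vars v₀ := fun h => hxV (mem_VV_cons.2 (Or.inl h))
    show subst θ₂ (θ₁ x) = var x
    rw [h3 x hxu hxv]
    show θ₂ x = var x
    refine k3 x (fun h => hxU (mem_UV_cons.2 (Or.inr ((hUV' x).1 h)))) (fun h => ?_)
    rcases hVV' x h with h' | h' | h'
    · exact hxV (mem_VV_cons.2 (Or.inr h'))
    · exact hxu h'
    · exact hxv h'
  · -- range
    intro x y hy
    obtain ⟨z, hz, hyz⟩ := vars_subst_mem.1 hy
    rcases k4 z y hyz with rfl | h | h
    · rcases h4 x y hz with h' | h' | h'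
      · exact Or.inl h'
      · exact Or.inr (Or.inl (mem_UV_cons.2 (Or.inl h')))
      · exact Or.inr (Or.inr (mem_VV_cons.2 (Or.inl h')))
    · exact Or.inr (Or.inl (mem_UV_cons.2 (Or.inr ((hUV' y).1 h))))
    · rcases hVV' y h with h' | h' | h'
      · exact Or.inr (Or.inr (mem_VV_cons.2 (Or.inr h')))
      · exact Or.inr (Or.inl (mem_UV_cons.2 (Or.inl h')))
      · exact Or.inr (Or.inr (mem_VV_cons.2 (Or.inl h')))
  · -- linear
    intro x hxU
    have hxu : x ∉ vars u₀ := fun h => hxU (mem_UV_cons.2 (Or.inl h))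
    exact (h5 x hxu).subst_lin
      (fun z hz => k5 z (haux x hxU z hz))
      (fun z z' hz hz' hne => k6 z z' (haux x hxU z hz) (haux x hxU z' hz') hne)
  · -- disjoint
    intro x y hxU hyU hxy
    have hxu : x ∉ vars u₀ := fun h => hxU (mem_UV_cons.2 (Or.inl h))
    have hyu : y ∉ vars u₀ := fun h => hyU (mem_UV_cons.2 (Or.inl h))
    ext w
    simp only [Set.mem_inter_iff, Set.mem_empty_iff_false, iff_false, not_and]
    intro hwx hwy
    obtain ⟨z, hz, hwz⟩ := vars_subst_mem.1 hwx
    obtain ⟨z', hz', hwz'⟩ := vars_subst_mem.1 hwy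
    have hzz' : z ≠ z' := by
      rintro rfl
      have : z ∈ vars (θ₁ x) ∩ vars (θ₁ y) := ⟨hz, hz'⟩
      rw [h6 x y hxu hyu hxy] at this; exact this
    have : w ∈ vars (θ₂ z) ∩ vars (θ₂ z') := ⟨hwz, hwz'⟩
    rw [k6 z z' (haux x hxU z hz) (haux y hyU z' hz') hzz'] at this
    exact this

end GTerm
namespace GTerm

variable {Ω : Type*} {F : GradedSig Ω}

lemma mem_UV_map {θ₁ : ℕ → GTerm F} {tail : List (GTerm F × GTerm F)} {x : ℕ} :
    x ∈ UV (tail.map fun q => (q.1, subst θ₁ q.2)) ↔ x ∈ UV tail := by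
  constructor
  · rintro ⟨q, hq, hx⟩
    obtain ⟨q', hq', rfl⟩ := List.mem_map.1 hq
    exact ⟨q', hq', hx⟩
  · rintro ⟨q', hq', hx⟩
    exact ⟨(q'.1, subst θ₁ q'.2), List.mem_map.2 ⟨q', hq', rfl⟩, hx⟩

lemma mem_VV_map {θ₁ : ℕ → GTerm F} {tail : List (GTerm F × GTerm F)} {S : Set ℕ}
    (h4 : ∀ z y, y ∈ vars (θ₁ z) → y = z ∨ y ∈ S) {x : ℕ}
    (hx : x ∈ VV (tail.map fun q => (q.1, subst θ₁ q.2))) : x ∈ VV tail ∨ x ∈ S := by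
  obtain ⟨q, hq, hx⟩ := hx
  obtain ⟨q', hq', rfl⟩ := List.mem_map.1 hq
  obtain ⟨z, hz, hxz⟩ := vars_subst_mem.1 hx
  rcases h4 z x hxz with rfl | h
  · exact Or.inl ⟨q', hq', hz⟩
  · exact Or.inr h

lemma vars_var_inter {z z' : ℕ} (h : z ≠ z') :
    vars (var z : GTerm F) ∩ vars (var z' : GTerm F) = ∅ := by
  simp only [vars_var]
  rw [Set.singleton_inter_eq_empty]
  simpa using h

lemma unify_exists : ∀ (n : ℕ) (ps : List (GTerm F × GTerm F)),
    (ps.map fun q => gsize q.1).sum ≤ n →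
    (∀ q ∈ ps, Linear q.1) →
    List.Pairwise (fun a b => vars a.1 ∩ vars b.1 = ∅) ps →
    (∀ x, x ∈ UV ps → x ∈ VV ps → False) →
    (∃ μ, Unifies μ ps) → ∃ θ, UOK ps θ := by
  intro n
  induction n with
  | zero =>
      intro ps hsz hlin hpw hdisj hex
      cases ps with
      | nil => exact ⟨var, UOK_nil⟩
      | cons q tail =>
          exfalso
          simp only [List.map_cons, List.sum_cons] at hsz
          have := gsize_pos q.1
          omega
  | succ n IH =>
      intro ps hsz hlin hpw hdisj hex
      cases ps with
      | nil => exact ⟨var, UOK_nil⟩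
      | cons q tail =>
          obtain ⟨u₀, v₀⟩ := q
          simp only [List.map_cons, List.sum_cons] at hsz
          have hpair : ∀ q' ∈ tail, vars u₀ ∩ vars q'.1 = ∅ :=
            fun q' hq' => (List.pairwise_cons.1 hpw).1 q' hq'
          have hpwt := (List.pairwise_cons.1 hpw).2
          have hlint : ∀ q' ∈ tail, Linear q'.1 :=
            fun q' hq' => hlin q' (List.mem_cons_of_mem _ hq')
          -- generic machinery for the two variable-binding cases
          have main : ∀ θ₁ : ℕ → GTerm F,
              (tail.map fun q => gsize q.1).sum ≤ n →
              subst θ₁ u₀ = subst θ₁ v₀ →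
              (∀ μ : ℕ → GTerm F, subst μ u₀ = subst μ v₀ → ∀ x, subst μ (θ₁ x) = μ x) →
              (∀ x, x ∉ vars u₀ → x ∉ vars v₀ → θ₁ x = var x) →
              (∀ x y, y ∈ vars (θ₁ x) → y = x ∨ y ∈ vars u₀ ∨ y ∈ vars v₀) →
              (∀ x, x ∉ vars u₀ → Linear (θ₁ x)) →
              (∀ x y, x ∉ vars u₀ → y ∉ vars u₀ → x ≠ y →
                vars (θ₁ x) ∩ vars (θ₁ y) = ∅) →
              ∃ θ, UOK (((u₀, v₀) : GTerm F × GTerm F) :: tail) θ := by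
            intro θ₁ hszt h1 h2 h3 h4 h5 h6
            have h4' : ∀ z y, y ∈ vars (θ₁ z) → y = z ∨ y ∈ vars u₀ ∪ vars v₀ := by
              intro z y hy
              rcases h4 z y hy with h | h | h
              · exact Or.inl h
              · exact Or.inr (Or.inl h)
              · exact Or.inr (Or.inr h)
            obtain ⟨θ₂, hok2⟩ := IH (tail.map fun q => (q.1, subst θ₁ q.2))
              (by rw [List.map_map]; exact hszt)
              (by
                intro q hq
                obtain ⟨q', hq', rfl⟩ := List.mem_map.1 hq
                exact hlint q' hq')
              (by
                rw [List.pairwise_map]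
                exact hpwt.imp (fun h => h))
              (by
                intro x hxU hxV
                have hxT : x ∈ UV tail := mem_UV_map.1 hxU
                obtain ⟨q', hq', hxq⟩ := hxT
                rcases mem_VV_map h4' hxV with h | h | h
                · exact hdisj x (mem_UV_cons.2 (Or.inr ⟨q', hq', hxq⟩))
                    (mem_VV_cons.2 (Or.inr h))
                · have : x ∈ vars u₀ ∩ vars q'.1 := ⟨h, hxq⟩
                  rw [hpair q' hq'] at this; exact this
                · exact hdisj x (mem_UV_cons.2 (Or.inr ⟨q', hq', hxq⟩))
                    (mem_VV_cons.2 (Or.inl h)))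
              (by
                obtain ⟨μ, hμ⟩ := hex
                have hμ₁ : ∀ z, subst μ (θ₁ z) = μ z :=
                  h2 μ (hμ _ (List.mem_cons_self))
                refine ⟨μ, fun q hq => ?_⟩
                obtain ⟨q', hq', rfl⟩ := List.mem_map.1 hq
                show subst μ q'.1 = subst μ (subst θ₁ q'.2)
                rw [subst_absorb hμ₁]
                exact hμ q' (List.mem_cons_of_mem _ hq'))
            exact ⟨_, UOK_step hpw hdisj h1 h2 h3 h4 h5 h6 hok2⟩
          cases u₀ with
          | var x =>
              have hxU : x ∈ UV (((var x, v₀) : GTerm F × GTerm F) :: tail) :=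
                mem_UV_cons.2 (Or.inl rfl)
              have hxv : x ∉ vars v₀ :=
                fun h => hdisj x hxU (mem_VV_cons.2 (Or.inl h))
              refine main (bind1 x v₀) (by simp [gsize] at hsz; omega) ?_ ?_ ?_ ?_ ?_ ?_
              · show subst (bind1 x v₀) (var x) = _
                rw [subst_var', bind1_same, subst_bind1_of_not_mem hxv]
              · intro μ hμ z
                rw [subst_var'] at hμ
                by_cases hz : z = x
                · subst hz; rw [bind1_same]; exact hμ.symm
                · rw [bind1_other hz]; rfl
              · intro z hz _
                exact bind1_other (fun e => hz (by rw [e]; rfl)) v₀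
              · intro z y hy
                by_cases hz : z = x
                · subst hz; rw [bind1_same] at hy; exact Or.inr (Or.inr hy)
                · rw [bind1_other hz] at hy
                  exact Or.inl hy
              · intro z hz
                rw [bind1_other (fun e => hz (by rw [e]; rfl))]
                exact linear_var z
              · intro z z' hz hz' hne
                rw [bind1_other (fun e => hz (by rw [e]; rfl)),
                  bind1_other (fun e => hz' (by rw [e]; rfl))]
                exact vars_var_inter hne
          | app f a =>
              cases v₀ with
              | var y =>
                  have hyV : y ∈ VV (((app f a, var y) : GTerm F × GTerm F) :: tail) :=
                    mem_VV_cons.2 (Or.inl rfl)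
                  have hyu : y ∉ vars (app f a) :=
                    fun h => hdisj y (mem_UV_cons.2 (Or.inl h)) hyV
                  have hlinu : Linear (app f a) := hlin _ (List.mem_cons_self)
                  refine main (bind1 y (app f a))
                    (by
                      have := gsize_pos (app f a : GTerm F)
                      omega) ?_ ?_ ?_ ?_ ?_ ?_
                  · show _ = subst (bind1 y (app f a)) (var y)
                    rw [subst_var', bind1_same, subst_bind1_of_not_mem hyu]
                  · intro μ hμ z
                    rw [subst_var'] at hμ
                    by_cases hz : z = y
                    · subst hz; rw [bind1_same]; exact hμ
                    · rw [bind1_other hz]; rfl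
                  · intro z _ hz
                    exact bind1_other (fun e => hz (by rw [e]; rfl)) _
                  · intro z w hw
                    by_cases hz : z = y
                    · subst hz; rw [bind1_same] at hw; exact Or.inr (Or.inl hw)
                    · rw [bind1_other hz] at hw
                      exact Or.inl hw
                  · intro z hz
                    by_cases hzy : z = y
                    · subst hzy; rw [bind1_same]; exact hlinu
                    · rw [bind1_other hzy]; exact linear_var z
                  · intro z z' hz hz' hne
                    by_cases hzy : z = y
                    · subst hzy
                      rw [bind1_same, bind1_other (fun e => hne (by rw [e]))]
                      rw [vars_var, Set.inter_singleton_eq_empty]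
                      exact hz'
                    · by_cases hzy' : z' = y
                      · subst hzy'
                        rw [bind1_same, bind1_other hzy]
                        rw [vars_var, Set.singleton_inter_eq_empty]
                        exact hz
                      · rw [bind1_other hzy, bind1_other hzy']
                        exact vars_var_inter hne
              | app g b =>
                  -- decompose: obtain f = g from unifiability
                  obtain ⟨μ₀, hμ₀⟩ := hex
                  have h₀ := hμ₀ _ (List.mem_cons_self)
                  rw [subst_app, subst_app] at h₀
                  injection h₀ with hfg hargs
                  subst hfg
                  have hcomp : ∀ j, subst μ₀ (a j) = subst μ₀ (b j) :=
                    fun j => congrFun (eq_of_heq hargs) j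
                  set ps' := (List.ofFn fun j => ((a j, b j) : GTerm F × GTerm F)) ++ tail
                    with hps'
                  have hmemA : ∀ j, ((a j, b j) : GTerm F × GTerm F) ∈ ps' := by
                    intro j
                    exact List.mem_append_left _ (List.mem_ofFn.2 ⟨j, rfl⟩)
                  have hlinu : Linear (app f a) := hlin _ (List.mem_cons_self)
                  have hU : UV ps' = UV (((app f a, app f b) : GTerm F × GTerm F) :: tail) := by
                    ext x
                    rw [mem_UV_cons]
                    constructor
                    · rintro ⟨q, hq, hx⟩
                      rcases List.mem_append.1 hq with h | h
                      · obtain ⟨j, rfl⟩ := List.mem_ofFn.1 h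
                        exact Or.inl (by rw [vars_app]; exact Set.mem_iUnion.2 ⟨j, hx⟩)
                      · exact Or.inr ⟨q, h, hx⟩
                    · rintro (h | ⟨q, hq, hx⟩)
                      · rw [vars_app] at h
                        obtain ⟨j, hj⟩ := Set.mem_iUnion.1 h
                        exact ⟨(a j, b j), hmemA j, hj⟩
                      · exact ⟨q, List.mem_append_right _ hq, hx⟩
                  have hV : VV ps' = VV (((app f a, app f b) : GTerm F × GTerm F) :: tail) := by
                    ext x
                    rw [mem_VV_cons]
                    constructor
                    · rintro ⟨q, hq, hx⟩
                      rcases List.mem_append.1 hq with h | h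
                      · obtain ⟨j, rfl⟩ := List.mem_ofFn.1 h
                        exact Or.inl (by rw [vars_app]; exact Set.mem_iUnion.2 ⟨j, hx⟩)
                      · exact Or.inr ⟨q, h, hx⟩
                    · rintro (h | ⟨q, hq, hx⟩)
                      · rw [vars_app] at h
                        obtain ⟨j, hj⟩ := Set.mem_iUnion.1 h
                        exact ⟨(a j, b j), hmemA j, hj⟩
                      · exact ⟨q, List.mem_append_right _ hq, hx⟩
                  obtain ⟨θ, k1, k2, k3, k4, k5, k6⟩ := IH ps'
                    (by
                      rw [hps', List.map_append, List.sum_append, List.map_ofFn]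
                      have : (List.ofFn ((fun q : GTerm F × GTerm F => gsize q.1) ∘
                        fun j => ((a j, b j) : GTerm F × GTerm F))).sum
                          = ∑ j, gsize (a j) := List.sum_ofFn
                      rw [this]
                      simp only [gsize] at hsz
                      omega)
                    (by
                      intro q hq
                      rcases List.mem_append.1 hq with h | h
                      · obtain ⟨j, rfl⟩ := List.mem_ofFn.1 h
                        exact hlinu.child j
                      · exact hlint q h)
                    (by
                      rw [List.pairwise_append]
                      refine ⟨?_, hpwt, ?_⟩
                      · rw [List.pairwise_ofFn]
                        intro i j hij
                        exact hlinu.child_disjoint (Fin.ne_of_lt hij)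
                      · intro q hq q' hq'
                        obtain ⟨j, rfl⟩ := List.mem_ofFn.1 hq
                        apply Set.eq_empty_of_subset_empty
                        calc vars (a j) ∩ vars q'.1
                            ⊆ vars (app f a) ∩ vars q'.1 := by
                              apply Set.inter_subset_inter_left
                              intro x hx
                              rw [vars_app]
                              exact Set.mem_iUnion.2 ⟨j, hx⟩
                          _ = ∅ := hpair q' hq')
                    (by
                      intro x hxU hxV
                      rw [hU] at hxU; rw [hV] at hxV
                      exact hdisj x hxU hxV)
                    (by
                      refine ⟨μ₀, fun q hq => ?_⟩
                      rcases List.mem_append.1 hq with h | h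
                      · obtain ⟨j, rfl⟩ := List.mem_ofFn.1 h
                        exact hcomp j
                      · exact hμ₀ q (List.mem_cons_of_mem _ h))
                  refine ⟨θ, ?_, ?_, ?_, ?_, ?_, ?_⟩
                  · intro q hq
                    rcases List.mem_cons.1 hq with rfl | hq'
                    · show subst θ (app f a) = subst θ (app f b)
                      rw [subst_app, subst_app]
                      congr 1
                      funext j
                      exact k1 _ (hmemA j)
                    · exact k1 q (List.mem_append_right _ hq')
                  · intro μ hμ x
                    refine k2 μ ?_ x
                    intro q hq
                    rcases List.mem_append.1 hq with h | h
                    · obtain ⟨j, rfl⟩ := List.mem_ofFn.1 h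
                      have := hμ _ (List.mem_cons_self)
                      rw [subst_app, subst_app] at this
                      injection this with _ hargs'
                      exact congrFun hargs' j
                    · exact hμ q (List.mem_cons_of_mem _ h)
                  · intro x hxU hxV
                    exact k3 x (by rw [hU]; exact hxU) (by rw [hV]; exact hxV)
                  · intro x y hy
                    rcases k4 x y hy with h | h | h
                    · exact Or.inl h
                    · exact Or.inr (Or.inl (by rw [← hU]; exact h))
                    · exact Or.inr (Or.inr (by rw [← hV]; exact h))
                  · intro x hx
                    exact k5 x (by rw [hU]; exact hx)
                  · intro x y hx hy hxy
                    exact k6 x y (by rw [hU]; exact hx) (by rw [hU]; exact hy) hxy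

end GTerm
namespace GTerm

variable {Ω : Type*} {F : GradedSig Ω}

lemma exists_mgu {u v : GTerm F} (hu : Linear u)
    (hd : ∀ y, y ∈ vars u → y ∈ vars v → False)
    (hex : ∃ μ, subst μ u = subst μ v) :
    ∃ θ : ℕ → GTerm F, subst θ u = subst θ v ∧
      (∀ μ, subst μ u = subst μ v → ∀ x, subst μ (θ x) = μ x) ∧
      (∀ x, x ∉ vars u → x ∉ vars v → θ x = var x) ∧
      (∀ x y, y ∈ vars (θ x) → y = x ∨ y ∈ vars u ∨ y ∈ vars v) ∧
      (∀ x, x ∉ vars u → Linear (θ x)) ∧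
      (∀ x y, x ∉ vars u → y ∉ vars u → x ≠ y → vars (θ x) ∩ vars (θ y) = ∅) := by
  have hUV : ∀ x, x ∈ UV ([((u, v) : GTerm F × GTerm F)]) ↔ x ∈ vars u := by
    intro x
    rw [mem_UV_cons]
    simp
  have hVV : ∀ x, x ∈ VV ([((u, v) : GTerm F × GTerm F)]) ↔ x ∈ vars v := by
    intro x
    rw [mem_VV_cons]
    simp
  obtain ⟨θ, k1, k2, k3, k4, k5, k6⟩ := unify_exists (gsize u) [((u, v) : GTerm F × GTerm F)]
    (by simp)
    (by rintro q hq; simp at hq; rw [hq]; exact hu)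
    (List.pairwise_singleton _ _)
    (fun x hxU hxV => hd x ((hUV x).1 hxU) ((hVV x).1 hxV))
    (by
      obtain ⟨μ, hμ⟩ := hex
      exact ⟨μ, by rintro q hq; simp at hq; rw [hq]; exact hμ⟩)
  refine ⟨θ, k1 _ (List.mem_cons_self), ?_, ?_, ?_, ?_, ?_⟩
  · intro μ hμ x
    exact k2 μ (by rintro q hq; simp at hq; rw [hq]; exact hμ) x
  · intro x hxu hxv
    exact k3 x (fun h => hxu ((hUV x).1 h)) (fun h => hxv ((hVV x).1 h))
  · intro x y hy
    rcases k4 x y hy with h | h | h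
    · exact Or.inl h
    · exact Or.inr (Or.inl ((hUV y).1 h))
    · exact Or.inr (Or.inr ((hVV y).1 h))
  · intro x hx
    exact k5 x (fun h => hx ((hUV x).1 h))
  · intro x y hx hy hxy
    exact k6 x y (fun h => hx ((hUV x).1 h)) (fun h => hy ((hUV y).1 h)) hxy

end GTerm

open GTerm in
lemma narrowing_lift_aux {Ω : Type*} [CommMonoid Ω] [CompleteLattice Ω] [IsQuantale Ω]
    (hΩ : Lawverean Ω) {F : GradedSig Ω} {R : Set (GTerm F × Ω × GTerm F)}
    (hRL : ∀ l ε r, (l, ε, r) ∈ R → GTerm.Linear r) :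
    ∀ {ε : Ω} {X s : GTerm F}, RewStar R ε X s → ∀ (t : GTerm F) (τ : ℕ → GTerm F),
      t.Linear → GTerm.subst τ t = X →
      ∃ (σ : ℕ → GTerm F) (δ : Ω) (s' : GTerm F) (χ : ℕ → GTerm F),
        NarrowStar R σ δ t s' ∧ ε ≤ δ ∧ GTerm.subst χ s' = s := by
  intro ε X s h
  induction h with
  | refl X =>
      intro t τ hlin heq
      exact ⟨GTerm.var, 1, t, τ, NarrowStar.refl t, le_refl 1, heq⟩
  | @step ε₁ ε₂ X u₁ s hrew hstar ih =>
      intro t τ hlin heq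
      subst heq
      obtain ⟨l, δ₀, r, σ, p, hrule, hsub, hu₁, hε₁⟩ := hrew
      rcases subtermAt_subst_cases hsub with ⟨f0, args0, hfp⟩ | ⟨p₁, p₂, x, rfl, hvp, hτx⟩
      · -- Case B: the redex position is a non-variable position of t
        set u : GTerm F := app f0 args0 with hu_def
        have hτu : GTerm.subst τ u = GTerm.subst σ l := by
          have h' := subtermAt_subst τ hfp
          rw [hsub] at h'
          exact (Option.some.inj h').symm
        obtain ⟨N, hN⟩ := exists_bound t
        set σ' : ℕ → GTerm F := fun y => if N ≤ y then σ (y - N) else GTerm.var y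
          with hσ'
        have hren : ∀ w₀ : GTerm F,
            GTerm.subst σ' (GTerm.subst (renameBy (· + N)) w₀) = GTerm.subst σ w₀ := by
          intro w₀
          rw [subst_subst]
          refine subst_eqOn fun z _ => ?_
          show GTerm.subst σ' (GTerm.var (z + N)) = σ z
          rw [subst_var', hσ']
          simp
        have hvarsren : ∀ (w₀ : GTerm F) y,
            y ∈ vars (GTerm.subst (renameBy (· + N)) w₀) → N ≤ y := by
          intro w₀ y hy
          obtain ⟨z, _, hyz⟩ := vars_subst_mem.1 hy
          have : y = z + N := by
            have : y ∈ vars (GTerm.var (z + N)) := hyz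
            simpa using this
          omega
        set l' : GTerm F := GTerm.subst (renameBy (· + N)) l with hl'
        set r' : GTerm F := GTerm.subst (renameBy (· + N)) r with hr'
        have hvu : ∀ y ∈ vars u, y < N := fun y hy => hN y (vars_subterm_subset hfp hy)
        have hdul : ∀ y, y ∈ vars u → y ∈ vars l' → False := by
          intro y hy hy'
          have := hvu y hy
          have := hvarsren l y hy'
          omega
        set μ : ℕ → GTerm F := fun y => if N ≤ y then σ' y else τ y with hμ_def
        have hμu : GTerm.subst μ u = GTerm.subst τ u := by
          refine subst_eqOn fun y hy => ?_
          have := hvu y hy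
          simp only [hμ_def]
          rw [if_neg (by omega)]
        have hμl' : GTerm.subst μ l' = GTerm.subst σ' l' := by
          refine subst_eqOn fun y hy => ?_
          have := hvarsren l y hy
          simp only [hμ_def]
          rw [if_pos this]
        have hμr' : GTerm.subst μ r' = GTerm.subst σ' r' := by
          refine subst_eqOn fun y hy => ?_
          have := hvarsren r y hy
          simp only [hμ_def]
          rw [if_pos this]
        have hμt : GTerm.subst μ t = GTerm.subst τ t := by
          refine subst_eqOn fun y hy => ?_
          have := hN y hy
          simp only [hμ_def]
          rw [if_neg (by omega)]
        have hμunif : GTerm.subst μ u = GTerm.subst μ l' := by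
          rw [hμu, hμl', hτu, hren l]
        have hlinu : Linear u := hlin.subterm hfp
        obtain ⟨θ, m1, m2, m3, m4, m5, m6⟩ :=
          exists_mgu hlinu hdul ⟨μ, hμunif⟩
        have hμfac : ∀ z, GTerm.subst μ (θ z) = μ z := m2 μ hμunif
        set st : NStep Ω F := ⟨p, l', r', δ₀, θ⟩ with hst
        have hstepok : StepOK R t st := by
          refine ⟨⟨f0, args0, hfp⟩, ⟨l, r, (· + N), add_left_injective N, hrule, rfl, rfl, ?_⟩,
            ⟨u, hfp, m1, fun τ'' hτ'' => ⟨τ'', fun z => m2 τ'' hτ'' z⟩⟩⟩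
          ext y
          simp only [Set.mem_inter_iff, Set.mem_union, Set.mem_empty_iff_false, iff_false,
            not_and]
          rintro (hy | hy) hyt
          · have := hvarsren l y hy
            have := hN y hyt
            omega
          · have := hvarsren r y hy
            have := hN y hyt
            omega
        have hlinr' : Linear r' := by
          refine (hRL l δ₀ r hrule).subst_lin (fun z _ => linear_var _) ?_
          intro z z' _ _ hne
          exact vars_var_inter fun h => hne (Nat.add_right_cancel h)
        have hdtr' : vars t ∩ vars r' = ∅ := by
          ext y
          simp only [Set.mem_inter_iff, Set.mem_empty_iff_false, iff_false, not_and]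
          intro hyt hyr
          have := hvarsren r y hyr
          have := hN y hyt
          omega
        have hlinX : Linear (replaceAt t p r') := hlin.replaceAt_lin hlinr' hdtr' p
        have hnotu : ∀ z, z ∈ vars (replaceAt t p r') → z ∉ vars u := by
          intro z hz
          rcases mem_vars_replaceAt_cases hlin hfp hz with h | ⟨_, h⟩
          · intro hzu
            have := hvarsren r z h
            have := hvu z hzu
            omega
          · exact h
        have hlint₁ : Linear (nnext t st) := by
          refine hlinX.subst_lin (fun z hz => m5 z (hnotu z hz))
            (fun z z' hz hz' hne => m6 z z' (hnotu z hz) (hnotu z' hz') hne)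
        have hpsome : (subtermAt t p).isSome := by rw [hfp]; rfl
        have hμt₁ : GTerm.subst μ (nnext t st) = u₁ := by
          show GTerm.subst μ (GTerm.subst θ (replaceAt t p r')) = u₁
          rw [subst_absorb hμfac, subst_replaceAt hpsome, hμt, hμr', hren r, hu₁]
        obtain ⟨σ₂, δ₂, s', χ, hns, hδ₂, hχ⟩ := ih (nnext t st) μ hlint₁ hμt₁
        have hnar : Narrow R θ (gradeAt t p δ₀) t (nnext t st) :=
          ⟨st, hstepok, rfl, rfl, rfl⟩
        refine ⟨fun v => GTerm.subst σ₂ (θ v), gradeAt t p δ₀ * δ₂, s', χ,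
          NarrowStar.step hnar hns, ?_, hχ⟩
        have hgr : ε₁ = gradeAt t p δ₀ := by
          rw [hε₁, gradeAt_subst hpsome]
        rw [hgr]
        exact mul_le_mul_right hδ₂ _
      · -- Case A: the redex is below a variable position of t
        set τ' : ℕ → GTerm F :=
          Function.update τ x (replaceAt (τ x) p₂ (GTerm.subst σ r)) with hτ'
        have hu₁' : GTerm.subst τ' t = u₁ := by
          rw [hu₁, replaceAt_under_var hlin hvp]
        obtain ⟨σ₃, δ, s', χ, hns, hδ, hχ⟩ := ih t τ' hlin hu₁'
        refine ⟨σ₃, δ, s', χ, hns, ?_, hχ⟩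
        calc ε₁ * ε₂ ≤ 1 * ε₂ := by
              rw [hΩ.1]
              exact mul_le_mul_left le_top ε₂
          _ = ε₂ := one_mul ε₂
          _ ≤ δ := hδ

/-- Lifting lemma for ordinary graded narrowing: let `R` be a right-linear `(Ω,Φ)`-TRS
over a Lawverean quantale, `t` a linear term, and `τ` a substitution. If `tτ →*_{R,ε} s`,
then there exists a narrowing derivation `t ⤳*_{R,σ,δ} s'` with `δ ≽ ε` and `s'` an
instance-generalization of `s`, i.e. `s'χ = s` for some substitution `χ`. -/
theorem narrowing_lifting {Ω : Type*} [CommMonoid Ω] [CompleteLattice Ω] [IsQuantale Ω]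
    (hΩ : Lawverean Ω) {F : GradedSig Ω} (hF : F.IsCBESig)
    (R : Set (GTerm F × Ω × GTerm F)) (hR : IsTRS R)
    (hRL : ∀ l ε r, (l, ε, r) ∈ R → GTerm.Linear r)
    {t : GTerm F} (hlin : t.Linear) (τ : ℕ → GTerm F) {ε : Ω} {s : GTerm F}
    (h : RewStar R ε (GTerm.subst τ t) s) :
    ∃ (σ : ℕ → GTerm F) (δ : Ω) (s' : GTerm F) (χ : ℕ → GTerm F),
      NarrowStar R σ δ t s' ∧ ε ≤ δ ∧ GTerm.subst χ s' = s :=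
  narrowing_lift_aux hΩ hRL h t τ hlin rfl
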